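/- Let A be an n×n diagonal real matrix with non-negative diagonal entries, B ∈ ℝ^n, C ∈ ℝ^n, and define Y_k = Σ_{j=1}^n B_j C_j A_{jj}^{k} for k = 0, 1, ..., t−1 (with t ≥ d + m). Then the absolute value of the d-th forward difference of (Y_0, ..., Y_{t−1}) at index m is at most (m/(d+m))^m · (d/(d+m))^d · n · max_j |B_j C_j|, assuming all A_{jj} ∈ [0,1]. -/

import Mathlib

open Finset

/-- Forward difference of a sequence. -/
def fdiff (X : ℕ → ℝ) : ℕ → ℝ := fun k => X (k + 1) - X k

lemma key_bound (m d : ℕ) (α : ℝ) (h0 : 0 ≤ α) (h1 : α ≤ 1) :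
    α ^ m * (1 - α) ^ d ≤ ((m : ℝ) / (d + m)) ^ m * ((d : ℝ) / (d + m)) ^ d := by
  have h1' : (0:ℝ) ≤ 1 - α := by linarith
  rcases Nat.eq_zero_or_pos m with hm | hm
  · subst hm
    simp only [pow_zero, one_mul, Nat.cast_zero, add_zero]
    rcases Nat.eq_zero_or_pos d with hd | hd
    · subst hd; simp
    · have hds : ((d:ℝ)/(d:ℝ)) = 1 := div_self (by positivity)
      rw [hds, one_pow]
      exact pow_le_one₀ h1' (by linarith)
  rcases Nat.eq_zero_or_pos d with hd | hd
  · subst hd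
    simp only [pow_zero, mul_one, one_mul, Nat.cast_zero, zero_add]
    have hms : ((m:ℝ)/(m:ℝ)) = 1 := div_self (by positivity)
    rw [hms, one_pow]
    exact pow_le_one₀ h0 h1
  have hm' : (0:ℝ) < m := by exact_mod_cast hm
  have hd' : (0:ℝ) < d := by exact_mod_cast hd
  have hs : (0:ℝ) < (d:ℝ) + m := by positivity
  set w₁ : ℝ := (m:ℝ) / ((d:ℝ)+m) with hw₁
  set w₂ : ℝ := (d:ℝ) / ((d:ℝ)+m) with hw₂
  have hw₁0 : 0 < w₁ := div_pos hm' hs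
  have hw₂0 : 0 < w₂ := div_pos hd' hs
  have hw : w₁ + w₂ = 1 := by rw [hw₁, hw₂]; field_simp; ring
  have hg := Real.geom_mean_le_arith_mean2_weighted hw₁0.le hw₂0.le
      (div_nonneg h0 hw₁0.le) (div_nonneg h1' hw₂0.le) hw
  have hsum : w₁ * (α / w₁) + w₂ * ((1-α)/w₂) = 1 := by
    field_simp
    ring
  rw [hsum] at hg
  have hb1 : (0:ℝ) ≤ (α / w₁) ^ w₁ := Real.rpow_nonneg (div_nonneg h0 hw₁0.le) _
  have hb2 : (0:ℝ) ≤ ((1-α) / w₂) ^ w₂ := Real.rpow_nonneg (div_nonneg h1' hw₂0.le) _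
  have hpow : ((α / w₁) ^ w₁ * ((1-α)/w₂) ^ w₂) ^ (d+m) ≤ 1 := by
    calc ((α / w₁) ^ w₁ * ((1-α)/w₂) ^ w₂) ^ (d+m) ≤ (1:ℝ)^(d+m) :=
          pow_le_pow_left₀ (mul_nonneg hb1 hb2) hg _
    _ = 1 := one_pow _
  rw [mul_pow] at hpow
  have e1 : ((α / w₁) ^ w₁) ^ (d+m) = (α/w₁)^m := by
    rw [← Real.rpow_natCast ((α/w₁) ^ w₁) (d+m), ← Real.rpow_mul (div_nonneg h0 hw₁0.le)]
    have : w₁ * ((d+m : ℕ):ℝ) = ((m:ℕ):ℝ) := by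
      push_cast [hw₁]; field_simp
    rw [this, Real.rpow_natCast]
  have e2 : (((1-α) / w₂) ^ w₂) ^ (d+m) = ((1-α)/w₂)^d := by
    rw [← Real.rpow_natCast (((1-α)/w₂) ^ w₂) (d+m), ← Real.rpow_mul (div_nonneg h1' hw₂0.le)]
    have : w₂ * ((d+m : ℕ):ℝ) = ((d:ℕ):ℝ) := by
      push_cast [hw₂]; field_simp
    rw [this, Real.rpow_natCast]
  rw [e1, e2] at hpow
  have heq : α ^ m * (1 - α) ^ d = ((α/w₁)^m * ((1-α)/w₂)^d) * (w₁^m * w₂^d) := by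
    rw [mul_mul_mul_comm, ← mul_pow, ← mul_pow, div_mul_cancel₀ _ hw₁0.ne',
      div_mul_cancel₀ _ hw₂0.ne']
  rw [heq]
  calc ((α/w₁)^m * ((1-α)/w₂)^d) * (w₁^m * w₂^d) ≤ 1 * (w₁^m * w₂^d) :=
        mul_le_mul_of_nonneg_right hpow (by positivity)
  _ = w₁^m * w₂^d := one_mul _

lemma fdiff_iter (n : ℕ) (f α : Fin n → ℝ) (d k : ℕ) :
    fdiff^[d] (fun k => ∑ j, f j * α j ^ k) k = ∑ j, f j * (α j - 1)^d * α j ^ k := by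
  induction d generalizing k with
  | zero => simp
  | succ d ih =>
    rw [Function.iterate_succ_apply']
    show fdiff (fdiff^[d] _) k = _
    rw [fdiff, ih, ih, ← Finset.sum_sub_distrib]
    exact Finset.sum_congr rfl fun j _ => by ring

theorem stmt_9 (n d m t : ℕ) (hn : 0 < n) (ht : d + m ≤ t)
    (A B C : Fin n → ℝ) (hA : ∀ j, A j ∈ Set.Icc (0 : ℝ) 1) :
    |fdiff^[d] (fun k => ∑ j, B j * C j * (A j) ^ k) m| ≤
      ((m : ℝ) / (d + m)) ^ m * ((d : ℝ) / (d + m)) ^ d * n *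
        (Finset.univ.sup' (Finset.univ_nonempty_iff.mpr ⟨⟨0, hn⟩⟩)
          (fun j => |B j * C j|)) := by
  set M := (Finset.univ.sup' (Finset.univ_nonempty_iff.mpr ⟨⟨0, hn⟩⟩)
      (fun j : Fin n => |B j * C j|)) with hM
  set bnd : ℝ := ((m : ℝ) / (d + m)) ^ m * ((d : ℝ) / (d + m)) ^ d with hbnd
  have hbnd0 : 0 ≤ bnd := by positivity
  have hM0 : 0 ≤ M := le_trans (abs_nonneg _)
    (Finset.le_sup' (fun j : Fin n => |B j * C j|) (Finset.mem_univ ⟨0, hn⟩))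
  rw [fdiff_iter]
  calc |∑ j, B j * C j * (A j - 1)^d * A j ^ m|
      ≤ ∑ j, |B j * C j * (A j - 1)^d * A j ^ m| := Finset.abs_sum_le_sum_abs _ _
    _ ≤ ∑ _j : Fin n, M * bnd := by
        apply Finset.sum_le_sum
        intro j _
        have hj := hA j
        obtain ⟨hj0, hj1⟩ := hj
        have hterm : |B j * C j * (A j - 1)^d * A j ^ m|
            = |B j * C j| * ((1 - A j)^d * A j ^ m) := by
          rw [abs_mul, abs_mul, abs_pow, abs_pow, abs_of_nonneg hj0,
            abs_sub_comm, abs_of_nonneg (by linarith : (0:ℝ) ≤ 1 - A j), mul_assoc]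
        rw [hterm]
        have h1 : |B j * C j| ≤ M :=
          Finset.le_sup' (fun j : Fin n => |B j * C j|) (Finset.mem_univ j)
        have h2 : (1 - A j)^d * A j ^ m ≤ bnd := by
          rw [mul_comm]; exact key_bound m d (A j) hj0 hj1
        exact mul_le_mul h1 h2 (mul_nonneg (pow_nonneg (by linarith) _) (pow_nonneg hj0 _)) hM0
    _ = (n:ℝ) * (M * bnd) := by rw [Finset.sum_const, Finset.card_univ, Fintype.card_fin,
          nsmul_eq_mul]
    _ = bnd * n * M := by ring
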